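/- Let ρ : Ω → ℝ≥0 be a probability density on a finite measure space Ω with ∫_Ω ρ log ρ dx ≤ C for some constant C ≥ 0. Then there exist constants c₁, c₂ > 0, depending only on C and |Ω|, such that the measure of the set A = {x : ρ(x) ≥ c₁} satisfies |A| ≥ c₂. Concretely, choosing c₁ small enough that c₁|Ω| ≤ 1/2, one has |A| ≥ min(1/2, (1/2)e^{-2C}). -/

import Mathlib

set_option maxHeartbeats 1000000


open MeasureTheory Real

lemma aux_neg_two_sqrt_le_mul_log {y : ℝ} (hy : 0 ≤ y) :
    -2 * Real.sqrt y ≤ y * Real.log y := by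
  rcases eq_or_lt_of_le hy with h | h
  · simp [← h]
  · have hs : 0 < Real.sqrt y := Real.sqrt_pos.2 h
    have h1 : Real.log (1 / Real.sqrt y) ≤ 1 / Real.sqrt y - 1 :=
      Real.log_le_sub_one_of_pos (by positivity)
    have h2 : Real.log (1 / Real.sqrt y) = -(Real.log y / 2) := by
      rw [Real.log_div one_ne_zero (ne_of_gt hs), Real.log_one, Real.log_sqrt hy]
      ring
    have h3 : -(2 / Real.sqrt y) ≤ Real.log y := by
      rw [h2] at h1
      have h25 : (2 : ℝ) / Real.sqrt y = 2 * (1 / Real.sqrt y) := by ring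
      rw [h25]
      linarith
    have h4 : y * (-(2 / Real.sqrt y)) ≤ y * Real.log y :=
      mul_le_mul_of_nonneg_left h3 hy
    have h5 : y * (-(2 / Real.sqrt y)) = -2 * Real.sqrt y := by
      rw [mul_neg, mul_div_assoc']
      rw [show y * 2 = 2 * y by ring, mul_div_assoc, Real.div_sqrt]
      ring
    linarith [h4, h5.symm ▸ h4]

/-- if a probability density `ρ` on a finite measure space has
`∫ ρ log ρ ≤ C`, then there are `c₁, c₂ > 0` with `|{ρ ≥ c₁}| ≥ c₂`; concretely,
one can take `c₁` with `c₁ |Ω| ≤ 1/2` and `c₂ = min (1/2) ((1/2) e^{-2C})`. -/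
theorem no_density_concentration
    {Ω : Type*} [MeasurableSpace Ω] (μ : Measure Ω) [IsFiniteMeasure μ]
    (ρ : Ω → ℝ) (hρ_meas : Measurable ρ) (hρ_nonneg : ∀ x, 0 ≤ ρ x)
    (hρ_int : Integrable ρ μ) (hρ_mass : ∫ x, ρ x ∂μ = 1)
    (C : ℝ) (hC : 0 ≤ C)
    (hent_int : Integrable (fun x => ρ x * Real.log (ρ x)) μ)
    (hent : ∫ x, ρ x * Real.log (ρ x) ∂μ ≤ C) :
    ∃ c₁ > 0, ∃ c₂ > 0,
      c₁ * (μ Set.univ).toReal ≤ 1 / 2 ∧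
      c₂ = min (1 / 2) ((1 / 2) * Real.exp (-(2 * C))) ∧
      c₂ ≤ (μ {x | c₁ ≤ ρ x}).toReal := by
  set V : ℝ := (μ Set.univ).toReal with hVdef
  have hV : 0 ≤ V := ENNReal.toReal_nonneg
  set ε₀ : ℝ := 1 / (10 * (V + 1) * (C + 1)) with hε₀def
  have hε₀pos : 0 < ε₀ := by positivity
  have hε₀le : ε₀ ≤ 1 / 10 := by
    rw [hε₀def, div_le_div_iff₀ (by positivity) (by norm_num)]
    nlinarith
  have hε₀V : ε₀ * V ≤ 1 / 10 := by
    rw [hε₀def, div_mul_eq_mul_div, one_mul, div_le_div_iff₀ (by positivity) (by norm_num)]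
    nlinarith
  set c₁ : ℝ := ε₀ ^ 2 with hc₁def
  have hc₁pos : 0 < c₁ := by positivity
  have hc₁V : c₁ * V ≤ 1 / 100 := by
    have : c₁ * V = ε₀ * (ε₀ * V) := by rw [hc₁def]; ring
    nlinarith
  set A : Set Ω := {x | c₁ ≤ ρ x} with hAdef
  have hA : MeasurableSet A := measurableSet_le measurable_const hρ_meas
  have hμAc_le : (μ Aᶜ).toReal ≤ V :=
    ENNReal.toReal_mono (measure_ne_top μ _) (measure_mono (Set.subset_univ _))
  have hμAc_nonneg : 0 ≤ (μ Aᶜ).toReal := ENNReal.toReal_nonneg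
  -- mass outside A is small
  have hmass_out : ∫ x in Aᶜ, ρ x ∂μ ≤ c₁ * V := by
    have h1 : ∫ x in Aᶜ, ρ x ∂μ ≤ ∫ _ in Aᶜ, c₁ ∂μ := by
      apply setIntegral_mono_on hρ_int.integrableOn (integrableOn_const (measure_ne_top μ _)) hA.compl
      intro x hx
      exact le_of_lt (not_le.1 hx)
    have h2 : ∫ _ in Aᶜ, c₁ ∂μ = (μ Aᶜ).toReal * c₁ := by
      rw [setIntegral_const]; simp [smul_eq_mul, Measure.real]
    calc ∫ x in Aᶜ, ρ x ∂μ ≤ (μ Aᶜ).toReal * c₁ := by rw [← h2]; exact h1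
      _ ≤ V * c₁ := mul_le_mul_of_nonneg_right hμAc_le hc₁pos.le
      _ = c₁ * V := mul_comm _ _
  have hsplit : ∫ x in A, ρ x ∂μ + ∫ x in Aᶜ, ρ x ∂μ = 1 := by
    rw [integral_add_compl hA hρ_int, hρ_mass]
  set t : ℝ := ∫ x in A, ρ x ∂μ with htdef
  have ht : 99 / 100 ≤ t := by
    have := hc₁V
    linarith [hmass_out, hsplit]
  have ht1 : t ≤ 1 := by
    have h0 : 0 ≤ ∫ x in Aᶜ, ρ x ∂μ :=
      setIntegral_nonneg hA.compl fun x _ => hρ_nonneg x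
    linarith [hsplit]
  -- entropy outside A bounded below
  have hent_out : -(2 * ε₀ * V) ≤ ∫ x in Aᶜ, ρ x * Real.log (ρ x) ∂μ := by
    have h1 : ∫ _ in Aᶜ, (-(2 * ε₀ : ℝ)) ∂μ ≤ ∫ x in Aᶜ, ρ x * Real.log (ρ x) ∂μ := by
      apply setIntegral_mono_on (integrableOn_const (measure_ne_top μ _))
        hent_int.integrableOn hA.compl
      intro x hx
      have hxlt : ρ x ≤ c₁ := le_of_lt (not_le.1 hx)
      have hsq : Real.sqrt (ρ x) ≤ ε₀ := by
        have : Real.sqrt (ρ x) ≤ Real.sqrt c₁ := Real.sqrt_le_sqrt hxlt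
        rwa [hc₁def, Real.sqrt_sq hε₀pos.le] at this
      have := aux_neg_two_sqrt_le_mul_log (hρ_nonneg x)
      nlinarith
    have h2 : ∫ _ in Aᶜ, (-(2 * ε₀ : ℝ)) ∂μ = (μ Aᶜ).toReal * (-(2 * ε₀)) := by
      rw [setIntegral_const]; simp [smul_eq_mul, Measure.real]
    have h3 : -(2 * ε₀ * V) ≤ (μ Aᶜ).toReal * (-(2 * ε₀)) := by nlinarith
    linarith [h1, h2 ▸ h1]
  have hent_split : ∫ x in A, ρ x * Real.log (ρ x) ∂μ
      + ∫ x in Aᶜ, ρ x * Real.log (ρ x) ∂μ = ∫ x, ρ x * Real.log (ρ x) ∂μ :=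
    integral_add_compl hA hent_int
  set E : ℝ := ∫ x in A, ρ x * Real.log (ρ x) ∂μ with hEdef
  have hE : E ≤ C + 2 * ε₀ * V := by linarith [hent_split, hent_out, hent]
  have hεV : 2 * ε₀ * V ≤ 1 / 5 := by linarith
  -- μ A is positive
  have hμA_ne : μ A ≠ 0 := by
    intro h
    have : t = 0 := by rw [htdef, Measure.restrict_eq_zero.2 h, integral_zero_measure]
    linarith
  set m : ℝ := (μ A).toReal with hmdef
  have hm0 : 0 < m := ENNReal.toReal_pos hμA_ne (measure_ne_top μ A)
  -- Jensen's inequality on A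
  haveI : NeZero (μ.restrict A) := ⟨fun h => hμA_ne (Measure.restrict_eq_zero.mp h)⟩
  have hjen : (fun x : ℝ => x * Real.log x) (⨍ x in A, ρ x ∂μ)
      ≤ ⨍ x in A, ρ x * Real.log (ρ x) ∂μ := by
    exact Real.convexOn_mul_log.map_average_le Real.continuous_mul_log.continuousOn
      isClosed_Ici (Filter.Eventually.of_forall fun x => hρ_nonneg x)
      hρ_int.restrict hent_int.restrict
  rw [setAverage_eq, setAverage_eq] at hjen
  simp only [smul_eq_mul, Measure.real, ← hmdef, ← htdef, ← hEdef] at hjen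
  -- hjen : (m⁻¹ * t) * log (m⁻¹ * t) ≤ m⁻¹ * E
  have hlog_split : Real.log (m⁻¹ * t) = Real.log t - Real.log m := by
    rw [Real.log_mul (by positivity) (by linarith), Real.log_inv]
    ring
  have hkey : t * (Real.log t - Real.log m) ≤ E := by
    rw [hlog_split] at hjen
    have := mul_le_mul_of_nonneg_left hjen hm0.le
    have hmm : m * m⁻¹ = 1 := mul_inv_cancel₀ hm0.ne'
    calc t * (Real.log t - Real.log m)
        = m * (m⁻¹ * t * (Real.log t - Real.log m)) := by
          field_simp
      _ ≤ m * (m⁻¹ * E) := this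
      _ = E := by field_simp
  -- lower bound on log m
  have ht0 : (0 : ℝ) < t := by linarith
  have hlogt : 1 - 1 / t ≤ Real.log t := by
    have h1 : Real.log (1 / t) ≤ 1 / t - 1 := Real.log_le_sub_one_of_pos (by positivity)
    rw [Real.log_div one_ne_zero ht0.ne', Real.log_one] at h1
    linarith
  have hlogm : Real.log t - E / t ≤ Real.log m := by
    have hEt' : t * (E / t) = E := by field_simp
    have hmul : t * (Real.log t - E / t) ≤ t * Real.log m := by nlinarith [hkey]
    exact le_of_mul_le_mul_left hmul ht0
  have hEt : E / t ≤ (C + 1 / 5) * (100 / 99) := by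
    have hE' : E ≤ C + 1 / 5 := by linarith
    rw [div_le_iff₀ ht0]
    nlinarith
  have hfinal : -(Real.log 2 + 2 * C) ≤ Real.log m := by
    have hl2 : (0.6931471803 : ℝ) < Real.log 2 := Real.log_two_gt_d9
    have h1t : 1 / t ≤ 100 / 99 := by
      rw [div_le_div_iff₀ ht0 (by norm_num)]; linarith
    nlinarith [hlogm, hlogt, hEt]
  have hm_ge : 1 / 2 * Real.exp (-(2 * C)) ≤ m := by
    have h1 : Real.exp (-(Real.log 2 + 2 * C)) ≤ Real.exp (Real.log m) :=
      Real.exp_le_exp.2 hfinal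
    rw [Real.exp_log hm0] at h1
    rw [show -(Real.log 2 + 2 * C) = -Real.log 2 + -(2 * C) by ring,
      Real.exp_add, Real.exp_neg, Real.exp_log two_pos] at h1
    linarith [h1]
  refine ⟨c₁, hc₁pos, min (1 / 2) (1 / 2 * Real.exp (-(2 * C))), ?_, ?_, rfl, ?_⟩
  · exact lt_min (by norm_num) (by positivity)
  · linarith
  · calc min (1 / 2) (1 / 2 * Real.exp (-(2 * C))) ≤ 1 / 2 * Real.exp (-(2 * C)) :=
        min_le_right _ _
      _ ≤ m := hm_ge
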